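/- arXiv:1801.03930 — 5 statements merged into one kernel-verified Lean document; each statement's English description precedes it below -/
import Mathlib

section
/- The kernel of the linearized strain operator ε on smooth vector fields on a connected open set D ⊆ ℝ³ is exactly the 6-dimensional space of rigid body motions, spanned by the three translations r₁ = (1,0,0), r₂ = (0,1,0), r₃ = (0,0,1) and the three rotations r₄ = (0, x₃, −x₂), r₅ = (−x₃, 0, x₁), r₆ = (−x₂, x₁, 0). That is, a C¹ vector field u on D satisfies ε(u) = 0 if and only if u(x) = a + b × x for some constant vectors a, b ∈ ℝ³. -/
open Set Metric

/-- Sum of scaled coordinate projections, the derivative of an affine function. -/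
noncomputable def sumProj (v : Fin 3 → ℝ) : (Fin 3 → ℝ) →L[ℝ] ℝ :=
  ∑ k, v k • (ContinuousLinearMap.proj k : (Fin 3 → ℝ) →L[ℝ] ℝ)

lemma sumProj_single (v : Fin 3 → ℝ) (j : Fin 3) : sumProj v (Pi.single j 1) = v j := by
  simp [sumProj, ContinuousLinearMap.sum_apply, Pi.single_apply]

lemma hasFDerivAt_affine (c : ℝ) (v : Fin 3 → ℝ) (x : Fin 3 → ℝ) :
    HasFDerivAt (fun y : Fin 3 → ℝ => c + ∑ k, v k * y k) (sumProj v) x := by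
  have h1 : ∀ k : Fin 3, HasFDerivAt (fun y : Fin 3 → ℝ => v k * y k)
      (v k • (ContinuousLinearMap.proj k : (Fin 3 → ℝ) →L[ℝ] ℝ)) x := by
    intro k
    exact ((ContinuousLinearMap.proj k : (Fin 3 → ℝ) →L[ℝ] ℝ).hasFDerivAt).const_mul (v k)
  have hs : HasFDerivAt (fun y : Fin 3 → ℝ => ∑ k, v k * y k)
      (∑ k, v k • (ContinuousLinearMap.proj k : (Fin 3 → ℝ) →L[ℝ] ℝ)) x :=
    HasFDerivAt.fun_sum (fun k _ => h1 k)
  have := (hasFDerivAt_const c x).fun_add hs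
  simpa [sumProj] using this

lemma fderiv_affine_single (c : ℝ) (v : Fin 3 → ℝ) (x : Fin 3 → ℝ) (j : Fin 3) :
    fderiv ℝ (fun y : Fin 3 → ℝ => c + ∑ k, v k * y k) x (Pi.single j 1) = v j := by
  rw [(hasFDerivAt_affine c v x).fderiv]; exact sumProj_single v j

/-- The matrix of the linear map `x ↦ b × x`. -/
def crossM (b : Fin 3 → ℝ) : Fin 3 → Fin 3 → ℝ :=
  ![![0, -b 2, b 1], ![b 2, 0, -b 0], ![-b 1, b 0, 0]]

lemma crossM_apply (b x : Fin 3 → ℝ) (m : Fin 3) :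
    crossProduct b x m = ∑ k, crossM b m k * x k := by
  fin_cases m <;> simp [crossProduct, crossM, Fin.sum_univ_three] <;> ring

lemma cross_of_skew (M : Fin 3 → Fin 3 → ℝ) (hskew : ∀ j k, M j k + M k j = 0)
    (x : Fin 3 → ℝ) (j : Fin 3) :
    ∑ k, M j k * x k = crossProduct ![M 2 1, M 0 2, M 1 0] x j := by
  have h00 : M 0 0 = 0 := by linarith [hskew 0 0]
  have h11 : M 1 1 = 0 := by linarith [hskew 1 1]
  have h22 : M 2 2 = 0 := by linarith [hskew 2 2]
  have h01 : M 0 1 = -M 1 0 := by linarith [hskew 0 1]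
  have h02 : M 0 2 = -M 2 0 := by linarith [hskew 0 2]
  have h12 : M 1 2 = -M 2 1 := by linarith [hskew 1 2]
  fin_cases j <;> simp [crossProduct, Fin.sum_univ_three, h00, h11, h22, h01, h02, h12] <;> ring

/-- Two rigid motions agreeing on a ball agree everywhere. -/
lemma rigid_unique {a b a' b' z : Fin 3 → ℝ} {ε : ℝ} (hε : 0 < ε)
    (h : ∀ y ∈ ball z ε, a + crossProduct b y = a' + crossProduct b' y) :
    a = a' ∧ b = b' := by
  have hz : a + crossProduct b z = a' + crossProduct b' z := h z (mem_ball_self hε)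
  have hk : ∀ k : Fin 3, crossProduct b (Pi.single k 1) = crossProduct b' (Pi.single k 1) := by
    intro k
    set w : Fin 3 → ℝ := (ε/2) • (Pi.single k 1 : Fin 3 → ℝ) with hw
    have hmem : z + w ∈ ball z ε := by
      have hd : dist (z + w) z = ε/2 := by
        rw [dist_eq_norm]
        simp [hw, norm_smul, Pi.norm_single, abs_of_pos hε]
      rw [mem_ball, hd]; linarith
    have h2 := h _ hmem
    rw [map_add, map_add] at h2
    rw [← add_assoc, ← add_assoc, hz] at h2
    have h3 := add_left_cancel h2
    rw [hw, map_smul, map_smul] at h3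
    have hne : (ε/2 : ℝ) ≠ 0 := by positivity
    exact smul_right_injective _ hne h3
  have hb : b = b' := by
    have e0 := hk 0
    have e1 := hk 1
    funext m
    fin_cases m
    · have := congrFun e1 2
      simpa [crossProduct, Pi.single_apply] using this
    · have := congrFun e0 2
      simpa [crossProduct, Pi.single_apply] using this
    · have := congrFun e0 1
      simpa [crossProduct, Pi.single_apply] using this
  have ha : a = a' := by
    rw [hb] at hz
    exact add_right_cancel hz
  exact ⟨ha, hb⟩

lemma diff_comp {D : Set (Fin 3 → ℝ)} (hD : IsOpen D) {u : (Fin 3 → ℝ) → (Fin 3 → ℝ)}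
    (hu : ContDiffOn ℝ 1 u D) {p : Fin 3 → ℝ} (hp : p ∈ D) (i : Fin 3) :
    DifferentiableAt ℝ (fun y => u y i) p := by
  have h1 : DifferentiableAt ℝ u p :=
    (hu.differentiableOn one_ne_zero).differentiableAt (hD.mem_nhds hp)
  have := (ContinuousLinearMap.proj i : (Fin 3 → ℝ) →L[ℝ] ℝ).differentiableAt.comp p h1
  simpa [Function.comp_def] using this

lemma quad_zero {D : Set (Fin 3 → ℝ)} {u : (Fin 3 → ℝ) → (Fin 3 → ℝ)}
    (hε : ∀ x ∈ D, ∀ i j : Fin 3,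
        fderiv ℝ (fun y => u y i) x (Pi.single j 1)
          + fderiv ℝ (fun y => u y j) x (Pi.single i 1) = 0)
    {x : Fin 3 → ℝ} (hx : x ∈ D) (d : Fin 3 → ℝ) :
    ∑ i, fderiv ℝ (fun y => u y i) x d * d i = 0 := by
  set f : Fin 3 → Fin 3 → ℝ := fun i j => fderiv ℝ (fun y => u y i) x (Pi.single j 1) with hf
  have hd : d = ∑ j, d j • (Pi.single j 1 : Fin 3 → ℝ) := by
    conv_lhs => rw [← Finset.univ_sum_single d]
    refine Finset.sum_congr rfl fun j _ => ?_
    rw [← Pi.single_smul, smul_eq_mul, mul_one]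
  have hL : ∀ i, fderiv ℝ (fun y => u y i) x d = ∑ j, d j * f i j := by
    intro i
    conv_lhs => rw [hd]
    rw [map_sum]
    exact Finset.sum_congr rfl fun j _ => by rw [map_smul]; simp [hf]
  have hgoal : ∑ i, fderiv ℝ (fun y => u y i) x d * d i
      = ∑ i, ∑ j, d j * f i j * d i := by
    refine Finset.sum_congr rfl fun i _ => ?_
    rw [hL i, Finset.sum_mul]
  rw [hgoal]
  set S := ∑ i, ∑ j, d j * f i j * d i with hS
  have hswap : S = ∑ i, ∑ j, d i * f j i * d j := Finset.sum_comm
  have h2 : S + S = 0 := by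
    nth_rewrite 2 [hswap]
    rw [← Finset.sum_add_distrib]
    rw [show (0:ℝ) = ∑ i : Fin 3, 0 by simp]
    refine Finset.sum_congr rfl fun i _ => ?_
    rw [← Finset.sum_add_distrib]
    rw [show (0:ℝ) = ∑ j : Fin 3, 0 by simp]
    refine Finset.sum_congr rfl fun j _ => ?_
    have h3 := hε x hx i j
    have : f i j + f j i = 0 := h3
    linear_combination d i * d j * this
  linarith

lemma seg_orth {D : Set (Fin 3 → ℝ)} (hD : IsOpen D) {u : (Fin 3 → ℝ) → (Fin 3 → ℝ)}
    (hu : ContDiffOn ℝ 1 u D)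
    (hq : ∀ x ∈ D, ∀ d : Fin 3 → ℝ, ∑ i, fderiv ℝ (fun y => u y i) x d * d i = 0)
    {c : Fin 3 → ℝ} {r : ℝ} (hball : ball c r ⊆ D)
    {x y : Fin 3 → ℝ} (hx : x ∈ ball c r) (hy : y ∈ ball c r) :
    ∑ i, (u x i - u y i) * (x i - y i) = 0 := by
  set d : Fin 3 → ℝ := x - y with hdd
  set γ : ℝ → Fin 3 → ℝ := fun t => y + t • d with hγ
  have hγmem : ∀ t ∈ Icc (0:ℝ) 1, γ t ∈ ball c r := by
    intro t ht
    have h := (convex_ball c r) hy hx (by linarith [ht.2] : (0:ℝ) ≤ 1 - t) ht.1 (by ring)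
    have heq : γ t = (1 - t) • y + t • x := by
      simp only [hγ, hdd, smul_sub, sub_smul, one_smul]
      abel
    rw [heq]; exact h
  have hψd : ∀ t ∈ Icc (0:ℝ) 1,
      HasDerivAt (fun s => ∑ i, (u (γ s) i - u y i) * d i) 0 t := by
    intro t ht
    have hmemD : γ t ∈ D := hball (hγmem t ht)
    have hpath : HasDerivAt γ d t := by
      have h1 : HasDerivAt (fun s : ℝ => s • d) ((1:ℝ) • d) t := (hasDerivAt_id t).smul_const d
      simpa [hγ] using h1.const_add y
    have hterm : ∀ i : Fin 3, HasDerivAt (fun s => (u (γ s) i - u y i) * d i)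
        (fderiv ℝ (fun z => u z i) (γ t) d * d i) t := by
      intro i
      have hdiffi := diff_comp hD hu hmemD i
      have hc : HasDerivAt (fun s => u (γ s) i) (fderiv ℝ (fun z => u z i) (γ t) d) t :=
        (hdiffi.hasFDerivAt).comp_hasDerivAt t hpath
      exact (hc.sub_const (u y i)).mul_const (d i)
    have hsum := HasDerivAt.sum (fun i (_ : i ∈ Finset.univ) => hterm i)
    have hzero : ∑ i, fderiv ℝ (fun z => u z i) (γ t) d * d i = 0 := hq _ hmemD d
    rw [hzero] at hsum
    exact hsum
  have hcont : ContinuousOn (fun s => ∑ i, (u (γ s) i - u y i) * d i) (Icc 0 1) :=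
    fun t ht => ((hψd t ht).continuousAt).continuousWithinAt
  have h10 := constant_of_has_deriv_right_zero hcont
    (fun t ht => ((hψd t (Ico_subset_Icc_self ht)).hasDerivWithinAt)) 1
    (right_mem_Icc.2 zero_le_one)
  have hγ0 : γ 0 = y := by simp [hγ]
  have hγ1 : γ 1 = x := by simp [hγ, hdd]
  rw [hγ0, hγ1] at h10
  simpa [hdd] using h10

lemma local_affine {u : (Fin 3 → ℝ) → (Fin 3 → ℝ)} {c : Fin 3 → ℝ} {r : ℝ} (hr : 0 < r)
    (hR : ∀ x ∈ ball c r, ∀ y ∈ ball c r,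
      ∑ i, u x i * y i + ∑ i, u y i * x i = ∑ i, u x i * x i + ∑ i, u y i * y i) :
    ∃ (p : Fin 3 → ℝ) (M : Fin 3 → Fin 3 → ℝ),
      ∀ x ∈ ball c r, ∀ j, u x j = p j + ∑ i, M j i * x i := by
  set yy : Fin 3 → (Fin 3 → ℝ) := fun j => c + (r/2) • (Pi.single j 1 : Fin 3 → ℝ) with hyy
  have hyymem : ∀ j, yy j ∈ ball c r := by
    intro j
    have hd : dist (yy j) c = r/2 := by
      rw [dist_eq_norm]
      simp [hyy, norm_smul, Pi.norm_single, abs_of_pos hr]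
    rw [mem_ball, hd]; linarith
  have hcmem : c ∈ ball c r := mem_ball_self hr
  refine ⟨fun j => (2/r) * ((∑ i, u (yy j) i * yy j i) - ∑ i, u c i * c i),
    fun j i => -(2/r) * (u (yy j) i - u c i), ?_⟩
  intro x hx j
  have h1 := hR x hx (yy j) (hyymem j)
  have h2 := hR x hx c hcmem
  have hyyi : ∀ i, yy j i = c i + (r/2) * (Pi.single j 1 : Fin 3 → ℝ) i := by
    intro i; simp [hyy]
  have hr' : (r : ℝ) ≠ 0 := ne_of_gt hr
  have hsingle : ∑ i, u x i * (Pi.single j 1 : Fin 3 → ℝ) i = u x j := by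
    simp [Pi.single_apply, mul_ite, Finset.sum_ite_eq]
  have h3 : ∑ i, u x i * yy j i = (∑ i, u x i * c i) + (r/2) * u x j := by
    have hterm : ∀ i, u x i * yy j i
        = u x i * c i + (r/2) * (u x i * (Pi.single j 1 : Fin 3 → ℝ) i) := by
      intro i; rw [hyyi]; ring
    rw [Finset.sum_congr rfl fun i _ => hterm i, Finset.sum_add_distrib,
      ← Finset.mul_sum, hsingle]
  have h5 : ∑ i, (-(2/r) * (u (yy j) i - u c i)) * x i
      = -(2/r) * ((∑ i, u (yy j) i * x i) - ∑ i, u c i * x i) := by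
    rw [← Finset.sum_sub_distrib, Finset.mul_sum]
    exact Finset.sum_congr rfl fun i _ => by ring
  have hA : (r/2) * u x j + (∑ i, u (yy j) i * x i) - ∑ i, u c i * x i
      = (∑ i, u (yy j) i * yy j i) - (∑ i, u c i * c i) := by linarith [h1, h2, h3]
  simp only []
  rw [h5]
  field_simp
  ring_nf
  ring_nf at hA
  linarith [hA]

lemma local_rigid {D : Set (Fin 3 → ℝ)} (hD : IsOpen D) {u : (Fin 3 → ℝ) → (Fin 3 → ℝ)}
    (hu : ContDiffOn ℝ 1 u D)
    (hε : ∀ x ∈ D, ∀ i j : Fin 3,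
        fderiv ℝ (fun y => u y i) x (Pi.single j 1)
          + fderiv ℝ (fun y => u y j) x (Pi.single i 1) = 0)
    {c : Fin 3 → ℝ} {r : ℝ} (hr : 0 < r) (hball : ball c r ⊆ D) :
    ∃ a b : Fin 3 → ℝ, ∀ x ∈ ball c r, u x = a + crossProduct b x := by
  have hq : ∀ x ∈ D, ∀ d : Fin 3 → ℝ, ∑ i, fderiv ℝ (fun y => u y i) x d * d i = 0 :=
    fun x hx d => quad_zero hε hx d
  have hR : ∀ x ∈ ball c r, ∀ y ∈ ball c r,
      ∑ i, u x i * y i + ∑ i, u y i * x i = ∑ i, u x i * x i + ∑ i, u y i * y i := by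
    intro x hx y hy
    have h := seg_orth hD hu hq hball hx hy
    simp only [Fin.sum_univ_three] at h ⊢
    ring_nf at h ⊢
    linarith
  obtain ⟨p, M, haff⟩ := local_affine hr hR
  have hloc : ∀ j, (fun y => u y j) =ᶠ[nhds c] fun y => p j + ∑ i, M j i * y i := by
    intro j
    filter_upwards [isOpen_ball.mem_nhds (mem_ball_self hr)] with y hy using haff y hy j
  have hfd : ∀ j k, fderiv ℝ (fun y => u y j) c (Pi.single k 1) = M j k := by
    intro j k
    rw [(hloc j).fderiv_eq]
    exact fderiv_affine_single (p j) (M j) c k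
  have hskew : ∀ j k, M j k + M k j = 0 := by
    intro j k
    have := hε c (hball (mem_ball_self hr)) j k
    rwa [hfd j k, hfd k j] at this
  refine ⟨p, ![M 2 1, M 0 2, M 1 0], ?_⟩
  intro x hx
  funext j
  rw [Pi.add_apply, haff x hx j, ← cross_of_skew M hskew x j]

/-- The kernel of the linearized strain operator ε on a connected open set
D ⊆ ℝ³ is exactly the space of rigid body motions: ε(u) = 0 on D iff
u(x) = a + b × x for some constant vectors a, b. -/
theorem stmt4 (D : Set (Fin 3 → ℝ)) (hD : IsOpen D) (hconn : IsConnected D)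
    (u : (Fin 3 → ℝ) → (Fin 3 → ℝ)) (hu : ContDiffOn ℝ 1 u D) :
    (∀ x ∈ D, ∀ i j : Fin 3,
        fderiv ℝ (fun y => u y i) x (Pi.single j 1)
          + fderiv ℝ (fun y => u y j) x (Pi.single i 1) = 0)
      ↔ ∃ a b : Fin 3 → ℝ, ∀ x ∈ D, u x = a + crossProduct b x := by
  constructor
  · intro hε
    obtain ⟨x₀, hx₀⟩ := hconn.nonempty
    obtain ⟨r₀, hr₀, hball₀⟩ := Metric.isOpen_iff.1 hD x₀ hx₀
    obtain ⟨a, b, hab⟩ := local_rigid hD hu hε hr₀ hball₀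
    set V : Set (Fin 3 → ℝ) :=
      {z | ∃ ε > 0, ball z ε ⊆ D ∧ ∀ y ∈ ball z ε, u y = a + crossProduct b y} with hV
    have hVopen : IsOpen V := by
      rw [Metric.isOpen_iff]
      rintro z ⟨ε, hε', hsub, hrep⟩
      refine ⟨ε, hε', fun w hw => ?_⟩
      have hd := mem_ball.1 hw
      refine ⟨ε - dist w z, by linarith, ?_, ?_⟩
      · exact (ball_subset_ball' (by linarith)).trans hsub
      · exact fun y hy => hrep y (ball_subset_ball' (by linarith) hy)
    have hx₀V : x₀ ∈ V := ⟨r₀, hr₀, hball₀, hab⟩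
    have hcl : closure V ∩ D ⊆ V := by
      rintro z ⟨hzc, hzD⟩
      obtain ⟨r, hr, hball⟩ := Metric.isOpen_iff.1 hD z hzD
      obtain ⟨a', b', hab'⟩ := local_rigid hD hu hε hr hball
      obtain ⟨w, hwball, hwV⟩ :=
        _root_.mem_closure_iff.1 hzc (ball z r) isOpen_ball (mem_ball_self hr)
      obtain ⟨εw, hεw, hsubw, hrepw⟩ := hwV
      have hdwz := mem_ball.1 hwball
      set δ := min εw (r - dist w z) with hδdef
      have hδ : 0 < δ := lt_min hεw (by linarith)
      have hsub1 : ball w δ ⊆ ball w εw := ball_subset_ball (min_le_left _ _)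
      have hsub2 : ball w δ ⊆ ball z r :=
        ball_subset_ball' (by have := min_le_right εw (r - dist w z); linarith)
      have hagree : ∀ y ∈ ball w δ, a + crossProduct b y = a' + crossProduct b' y := by
        intro y hy
        rw [← hrepw y (hsub1 hy), ← hab' y (hsub2 hy)]
      obtain ⟨ha, hb⟩ := rigid_unique hδ hagree
      exact ⟨r, hr, hball, fun y hy => by rw [hab' y hy, ← ha, ← hb]⟩
    have hDV : D ⊆ V :=
      hconn.isPreconnected.subset_of_closure_inter_subset hVopen ⟨x₀, hx₀, hx₀V⟩ hcl
    refine ⟨a, b, fun x hx => ?_⟩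
    obtain ⟨ε, hε', hsub, hrep⟩ := hDV hx
    exact hrep x (mem_ball_self hε')
  · rintro ⟨a, b, hab⟩ x hx i j
    have hloc : ∀ m : Fin 3, (fun y => u y m) =ᶠ[nhds x]
        fun y => a m + ∑ k, crossM b m k * y k := by
      intro m
      filter_upwards [hD.mem_nhds hx] with y hy
      rw [hab y hy, Pi.add_apply, crossM_apply]
    have hfd : ∀ m k : Fin 3, fderiv ℝ (fun y => u y m) x (Pi.single k 1) = crossM b m k := by
      intro m k
      rw [(hloc m).fderiv_eq]
      exact fderiv_affine_single (a m) (crossM b m) x k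
    rw [hfd i j, hfd j i]
    fin_cases i <;> fin_cases j <;> simp [crossM]
end

section
/- Let V be a finite-dimensional real inner product space with symmetric positive definite operator A, and let V = V₀ + V₁ + ⋯ + V_J be a space decomposition into subspaces. Let B_i be symmetric positive definite operators on V_i and define the additive Schwarz preconditioner B⁻¹ = Σ_i B_i⁻¹ Q_i, where Q_i is the orthogonal projection onto V_i. Suppose that for every v ∈ V there exists a decomposition v = Σ_i v_i with v_i ∈ V_i such that Σ_i (B_i v_i, v_i) ≤ C₀ (A v, v). Then the smallest eigenvalue of B⁻¹A satisfies λ_min(B⁻¹A) ≥ 1/C₀. -/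
open RealInnerProductSpace

/-- Cauchy–Schwarz for a symmetric positive semidefinite bilinear form on a submodule. -/
lemma aux_cs {V : Type*} [NormedAddCommGroup V] [InnerProductSpace ℝ V]
    (S : Submodule ℝ V) (B : V →ₗ[ℝ] V)
    (hsymm : ∀ u ∈ S, ∀ v ∈ S, ⟪B u, v⟫ = ⟪u, B v⟫)
    (hpos : ∀ v ∈ S, v ≠ 0 → 0 < ⟪B v, v⟫)
    (u w : V) (hu : u ∈ S) (hw : w ∈ S) :
    ⟪B u, w⟫ ≤ Real.sqrt ⟪B u, u⟫ * Real.sqrt ⟪B w, w⟫ := by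
  have hnn : ∀ x ∈ S, 0 ≤ ⟪B x, x⟫ := by
    intro x hx
    rcases eq_or_ne x 0 with h | h
    · simp [h]
    · exact (hpos x hx h).le
  have hquad : ∀ t : ℝ, 0 ≤ ⟪B w, w⟫ * (t * t) + (-2 * ⟪B u, w⟫) * t + ⟪B u, u⟫ := by
    intro t
    have hmem : u - t • w ∈ S := S.sub_mem hu (S.smul_mem t hw)
    have h0 := hnn _ hmem
    have hcross : ⟪B w, u⟫ = ⟪B u, w⟫ := by
      rw [hsymm w hw u hu, real_inner_comm]
    have hexp : ⟪B (u - t • w), u - t • w⟫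
        = ⟪B w, w⟫ * (t * t) + (-2 * ⟪B u, w⟫) * t + ⟪B u, u⟫ := by
      rw [map_sub, map_smul]
      simp only [inner_sub_left, inner_sub_right, real_inner_smul_left,
        real_inner_smul_right, hcross]
      ring
    linarith [h0, hexp ▸ h0]
  have hd := discrim_le_zero hquad
  rw [discrim] at hd
  have hsq : ⟪B u, w⟫ ^ 2 ≤ ⟪B u, u⟫ * ⟪B w, w⟫ := by nlinarith
  calc ⟪B u, w⟫ ≤ |⟪B u, w⟫| := le_abs_self _
    _ = Real.sqrt (⟪B u, w⟫ ^ 2) := (Real.sqrt_sq_eq_abs _).symm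
    _ ≤ Real.sqrt (⟪B u, u⟫ * ⟪B w, w⟫) := Real.sqrt_le_sqrt hsq
    _ = Real.sqrt ⟪B u, u⟫ * Real.sqrt ⟪B w, w⟫ :=
        Real.sqrt_mul (hnn u hu) _

/-- Stable-decomposition (lower bound) lemma of abstract additive Schwarz
theory: if every v admits a decomposition v = Σᵢ vᵢ with
Σᵢ (Bᵢvᵢ, vᵢ) ≤ C₀ (Av, v), then λ_min(B⁻¹A) ≥ 1/C₀. -/
theorem stmt7 {V : Type*} [NormedAddCommGroup V] [InnerProductSpace ℝ V]
    [FiniteDimensional ℝ V]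
    (J : ℕ) (Vs : Fin (J + 1) → Submodule ℝ V) (hsum : (⨆ i, Vs i) = ⊤)
    (A : V →ₗ[ℝ] V)
    (hAsymm : ∀ u v, ⟪A u, v⟫ = ⟪u, A v⟫)
    (hApos : ∀ v, v ≠ 0 → 0 < ⟪A v, v⟫)
    (Bi : Fin (J + 1) → V →ₗ[ℝ] V)
    (hBmap : ∀ i, ∀ v ∈ Vs i, Bi i v ∈ Vs i)
    (hBsymm : ∀ i, ∀ u ∈ Vs i, ∀ v ∈ Vs i, ⟪Bi i u, v⟫ = ⟪u, Bi i v⟫)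
    (hBpos : ∀ i, ∀ v ∈ Vs i, v ≠ 0 → 0 < ⟪Bi i v, v⟫)
    (Binv : Fin (J + 1) → V →ₗ[ℝ] V)
    (hBinv : ∀ i, ∀ v ∈ Vs i, Binv i v ∈ Vs i ∧ Bi i (Binv i v) = v)
    (C₀ : ℝ) (hC₀ : 0 < C₀)
    (hstable : ∀ v : V, ∃ w : Fin (J + 1) → V, (∀ i, w i ∈ Vs i) ∧
        (∑ i, w i) = v ∧ (∑ i, ⟪Bi i (w i), w i⟫) ≤ C₀ * ⟪A v, v⟫) :
    ∀ (lam : ℝ) (v : V), v ≠ 0 →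
      (∑ i, Binv i ((Submodule.orthogonalProjection (Vs i) (A v) : V))) = lam • v →
      1 / C₀ ≤ lam := by
  intro lam v hv hev
  obtain ⟨w, hwmem, hwsum, hwstable⟩ := hstable v
  set a : ℝ := ⟪A v, v⟫ with ha
  have ha_pos : 0 < a := hApos v hv
  -- the pieces u i = Bᵢ⁻¹ Qᵢ A v
  set u : Fin (J + 1) → V := fun i => Binv i ((Submodule.orthogonalProjection (Vs i) (A v) : V)) with hu
  have hQmem : ∀ i, ((Submodule.orthogonalProjection (Vs i) (A v) : V)) ∈ Vs i :=
    fun i => (Submodule.orthogonalProjection (Vs i) (A v)).2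
  have humem : ∀ i, u i ∈ Vs i := fun i => (hBinv i _ (hQmem i)).1
  have hBu : ∀ i, Bi i (u i) = (Submodule.orthogonalProjection (Vs i) (A v) : V) :=
    fun i => (hBinv i _ (hQmem i)).2
  -- projection identity : ⟪A v, x⟫ = ⟪Q i (A v), x⟫ for x ∈ Vs i
  have hproj : ∀ i, ∀ x ∈ Vs i,
      ⟪(A v : V), x⟫ = ⟪((Submodule.orthogonalProjection (Vs i) (A v) : V)), x⟫ := by
    intro i x hx
    have h := Submodule.starProjection_inner_eq_zero (K := Vs i) (A v) x hx
    rw [inner_sub_left, sub_eq_zero] at h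
    exact h
  -- key sum identities
  have hsum1 : a = ∑ i, ⟪Bi i (u i), w i⟫ := by
    calc a = ⟪A v, ∑ i, w i⟫ := by rw [hwsum]
      _ = ∑ i, ⟪(A v : V), w i⟫ := inner_sum _ _ _
      _ = ∑ i, ⟪Bi i (u i), w i⟫ := by
          refine Finset.sum_congr rfl fun i _ => ?_
          rw [hBu i]; exact hproj i (w i) (hwmem i)
  have hsum2 : ∑ i, ⟪Bi i (u i), u i⟫ = lam * a := by
    calc ∑ i, ⟪Bi i (u i), u i⟫ = ∑ i, ⟪(A v : V), u i⟫ := by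
          refine Finset.sum_congr rfl fun i _ => ?_
          rw [hBu i]; exact (hproj i (u i) (humem i)).symm
      _ = ⟪A v, ∑ i, u i⟫ := (inner_sum _ _ _).symm
      _ = ⟪A v, lam • v⟫ := by rw [← hev]
      _ = lam * a := by rw [real_inner_smul_right]
  -- Cauchy–Schwarz pointwise and for sums
  set f : Fin (J + 1) → ℝ := fun i => Real.sqrt ⟪Bi i (u i), u i⟫ with hf
  set g : Fin (J + 1) → ℝ := fun i => Real.sqrt ⟪Bi i (w i), w i⟫ with hg
  have hnn : ∀ i, ∀ x ∈ Vs i, 0 ≤ ⟪Bi i x, x⟫ := by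
    intro i x hx
    rcases eq_or_ne x 0 with h | h
    · simp [h]
    · exact (hBpos i x hx h).le
  have hfg : a ≤ ∑ i, f i * g i := by
    rw [hsum1]
    exact Finset.sum_le_sum fun i _ =>
      aux_cs (Vs i) (Bi i) (hBsymm i) (hBpos i) (u i) (w i) (humem i) (hwmem i)
  have hf2 : ∑ i, f i ^ 2 = lam * a := by
    rw [← hsum2]
    exact Finset.sum_congr rfl fun i _ => Real.sq_sqrt (hnn i (u i) (humem i))
  have hg2 : ∑ i, g i ^ 2 ≤ C₀ * a := by
    calc ∑ i, g i ^ 2 = ∑ i, ⟪Bi i (w i), w i⟫ :=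
          Finset.sum_congr rfl fun i _ => Real.sq_sqrt (hnn i (w i) (hwmem i))
      _ ≤ C₀ * a := hwstable
  have hcs := Finset.sum_mul_sq_le_sq_mul_sq Finset.univ f g
  have hla : 0 ≤ lam * a := by
    rw [← hf2]; exact Finset.sum_nonneg fun i _ => sq_nonneg _
  have hkey : a ^ 2 ≤ (lam * a) * (C₀ * a) := by
    calc a ^ 2 ≤ (∑ i, f i * g i) ^ 2 := by
          have h0 : 0 ≤ a := ha_pos.le
          exact pow_le_pow_left₀ h0 hfg 2
      _ ≤ (∑ i, f i ^ 2) * (∑ i, g i ^ 2) := hcs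
      _ ≤ (lam * a) * (C₀ * a) := by
          rw [hf2]
          exact mul_le_mul_of_nonneg_left hg2 hla
  have h1 : 1 ≤ lam * C₀ := by nlinarith [hkey, mul_pos ha_pos ha_pos]
  rw [div_le_iff₀ hC₀]
  linarith [h1]
end

section
/- Let V be a finite-dimensional real inner product space with symmetric positive definite operator A, subspaces V₀,…,V_J with V = Σ_i V_i, B_i symmetric positive definite on V_i, and B⁻¹ = Σ_i B_i⁻¹ Q_i with Q_i the orthogonal projection onto V_i. Suppose that for every decomposition v = Σ_i v_i with v_i ∈ V_i one has (A v, v) ≤ C₁ Σ_i (B_i v_i, v_i). Then λ_max(B⁻¹A) ≤ C₁. -/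
open RealInnerProductSpace

/-- Upper-bound half of abstract additive Schwarz theory: if for every
decomposition v = Σᵢ vᵢ one has (Av, v) ≤ C₁ Σᵢ (Bᵢvᵢ, vᵢ), then
λ_max(B⁻¹A) ≤ C₁. -/
theorem stmt8 {V : Type*} [NormedAddCommGroup V] [InnerProductSpace ℝ V]
    [FiniteDimensional ℝ V]
    (J : ℕ) (Vs : Fin (J + 1) → Submodule ℝ V) (hsum : (⨆ i, Vs i) = ⊤)
    (A : V →ₗ[ℝ] V)
    (hAsymm : ∀ u v, ⟪A u, v⟫ = ⟪u, A v⟫)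
    (hApos : ∀ v, v ≠ 0 → 0 < ⟪A v, v⟫)
    (Bi : Fin (J + 1) → V →ₗ[ℝ] V)
    (hBmap : ∀ i, ∀ v ∈ Vs i, Bi i v ∈ Vs i)
    (hBsymm : ∀ i, ∀ u ∈ Vs i, ∀ v ∈ Vs i, ⟪Bi i u, v⟫ = ⟪u, Bi i v⟫)
    (hBpos : ∀ i, ∀ v ∈ Vs i, v ≠ 0 → 0 < ⟪Bi i v, v⟫)
    (Binv : Fin (J + 1) → V →ₗ[ℝ] V)
    (hBinv : ∀ i, ∀ v ∈ Vs i, Binv i v ∈ Vs i ∧ Bi i (Binv i v) = v)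
    (C₁ : ℝ) (hC₁ : 0 < C₁)
    (hbound : ∀ w : Fin (J + 1) → V, (∀ i, w i ∈ Vs i) →
        ⟪A (∑ i, w i), ∑ i, w i⟫ ≤ C₁ * ∑ i, ⟪Bi i (w i), w i⟫) :
    ∀ (lam : ℝ) (v : V), v ≠ 0 →
      (∑ i, Binv i ((Submodule.orthogonalProjectionOnto (Vs i) (A v) : V))) = lam • v →
      lam ≤ C₁ := by
  intro lam v hv hev
  set w : Fin (J + 1) → V := fun i => Binv i ((Submodule.orthogonalProjectionOnto (Vs i) (A v) : V)) with hw
  have hwmem : ∀ i, w i ∈ Vs i := fun i =>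
    (hBinv i _ (Submodule.orthogonalProjectionOnto (Vs i) (A v)).2).1
  have hBw : ∀ i, Bi i (w i) = (Submodule.orthogonalProjectionOnto (Vs i) (A v) : V) := fun i =>
    (hBinv i _ (Submodule.orthogonalProjectionOnto (Vs i) (A v)).2).2
  have hproj : ∀ i, ⟪Bi i (w i), w i⟫ = ⟪A v, w i⟫ := by
    intro i
    rw [hBw i]
    have := Submodule.starProjection_inner_eq_zero (K := Vs i) (A v) (w i) (hwmem i)
    have h2 : ⟪A v - (Submodule.orthogonalProjectionOnto (Vs i) (A v) : V), w i⟫ = 0 := this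
    rw [inner_sub_left] at h2
    linarith
  have hsum1 : ∑ i, ⟪Bi i (w i), w i⟫ = lam * ⟪A v, v⟫ := by
    calc ∑ i, ⟪Bi i (w i), w i⟫ = ∑ i, ⟪A v, w i⟫ := by
          exact Finset.sum_congr rfl fun i _ => hproj i
      _ = ⟪A v, ∑ i, w i⟫ := by rw [inner_sum]
      _ = ⟪A v, lam • v⟫ := by rw [hev]
      _ = lam * ⟪A v, v⟫ := real_inner_smul_right _ _ _
  have hsum2 : ⟪A (∑ i, w i), ∑ i, w i⟫ = lam * (lam * ⟪A v, v⟫) := by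
    rw [hev, map_smul, real_inner_smul_left, real_inner_smul_right]
  have hb := hbound w hwmem
  rw [hsum1, hsum2] at hb
  have hp : 0 < ⟪A v, v⟫ := hApos v hv
  rcases le_or_gt lam 0 with h | h
  · linarith
  · nlinarith [mul_pos h hp]
end

section
/- Let V be a finite-dimensional real inner product space, A symmetric positive definite on V, and suppose the index set {0, 1, …, J} is colored with N_c colors such that whenever i ≠ j receive the same color, the subspaces V_i, V_j ⊆ V are A-orthogonal: 𝒜(v_i, v_j) = 0 for all v_i ∈ V_i, v_j ∈ V_j. Then for any v_i ∈ V_i, ‖Σ_i v_i‖²_A ≤ N_c Σ_i ‖v_i‖²_A, where ‖v‖²_A = 𝒜(v,v). -/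
open Finset

lemma bil_cs {V : Type*} [AddCommGroup V] [Module ℝ V]
    (𝒜 : V →ₗ[ℝ] V →ₗ[ℝ] ℝ)
    (hsymm : ∀ u v, 𝒜 u v = 𝒜 v u) (hnn : ∀ v, 0 ≤ 𝒜 v v)
    (x y : V) : 𝒜 x y ≤ Real.sqrt (𝒜 x x) * Real.sqrt (𝒜 y y) := by
  have key : (𝒜 x y) ^ 2 ≤ 𝒜 x x * 𝒜 y y := by
    have h : ∀ t : ℝ, 0 ≤ (𝒜 y y) * (t * t) + (2 * 𝒜 x y) * t + 𝒜 x x := by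
      intro t
      have := hnn (x + t • y)
      simp only [map_add, map_smul, LinearMap.add_apply, LinearMap.smul_apply,
        smul_eq_mul] at this
      rw [hsymm y x] at this
      nlinarith
    have := discrim_le_zero h
    rw [discrim] at this
    nlinarith
  calc 𝒜 x y ≤ |𝒜 x y| := le_abs_self _
    _ = Real.sqrt ((𝒜 x y) ^ 2) := (Real.sqrt_sq_eq_abs _).symm
    _ ≤ Real.sqrt (𝒜 x x * 𝒜 y y) := Real.sqrt_le_sqrt key
    _ = Real.sqrt (𝒜 x x) * Real.sqrt (𝒜 y y) := Real.sqrt_mul (hnn x) _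

/-- Coloring argument: if the index set is colored with N_c colors such that
subspaces with equal colors are 𝒜-orthogonal, then
‖Σᵢ vᵢ‖²_A ≤ N_c Σᵢ ‖vᵢ‖²_A. -/
theorem stmt15 {V : Type*} [NormedAddCommGroup V] [InnerProductSpace ℝ V]
    [FiniteDimensional ℝ V]
    (𝒜 : V →ₗ[ℝ] V →ₗ[ℝ] ℝ)
    (hsymm : ∀ u v, 𝒜 u v = 𝒜 v u) (hpos : ∀ v, v ≠ 0 → 0 < 𝒜 v v)
    (J Nc : ℕ) (Vs : Fin (J + 1) → Submodule ℝ V)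
    (c : Fin (J + 1) → Fin Nc)
    (hcolor : ∀ i j, i ≠ j → c i = c j →
      ∀ vi ∈ Vs i, ∀ vj ∈ Vs j, 𝒜 vi vj = 0) :
    ∀ w : Fin (J + 1) → V, (∀ i, w i ∈ Vs i) →
      𝒜 (∑ i, w i) (∑ i, w i) ≤ (Nc : ℝ) * ∑ i, 𝒜 (w i) (w i) := by
  intro w hw
  have hnn : ∀ v, 0 ≤ 𝒜 v v := by
    intro v
    rcases eq_or_ne v 0 with rfl | h
    · simp
    · exact (hpos v h).le
  -- group by color
  set u : Fin Nc → V := fun k => ∑ i ∈ univ.filter (fun i => c i = k), w i with hu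
  have hsum : ∑ i, w i = ∑ k, u k := by
    rw [hu]
    exact (Finset.sum_fiberwise univ c w).symm
  -- diagonal identity within each color
  have hdiag : ∀ k, 𝒜 (u k) (u k) = ∑ i ∈ univ.filter (fun i => c i = k), 𝒜 (w i) (w i) := by
    intro k
    rw [hu]
    simp only [map_sum, LinearMap.coe_sum, Finset.sum_apply]
    rw [Finset.sum_comm]
    apply Finset.sum_congr rfl
    intro i hi
    simp only [mem_filter, mem_univ, true_and] at hi
    rw [Finset.sum_eq_single i]
    · intro j hj hji
      simp only [mem_filter, mem_univ, true_and] at hj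
      exact hcolor i j (Ne.symm hji) (hi.trans hj.symm) _ (hw i) _ (hw j)
    · intro h; simp [hi] at h
  have hsum2 : ∑ k, 𝒜 (u k) (u k) = ∑ i, 𝒜 (w i) (w i) := by
    simp_rw [hdiag]
    exact Finset.sum_fiberwise univ c (fun i => 𝒜 (w i) (w i))
  rw [hsum, ← hsum2]
  -- main Cauchy–Schwarz step
  calc 𝒜 (∑ k, u k) (∑ k, u k)
      = ∑ k, ∑ l, 𝒜 (u k) (u l) := by
        simp only [map_sum, LinearMap.coe_sum, Finset.sum_apply]
        exact Finset.sum_comm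
    _ ≤ ∑ k, ∑ l, Real.sqrt (𝒜 (u k) (u k)) * Real.sqrt (𝒜 (u l) (u l)) := by
        apply Finset.sum_le_sum; intro k _
        apply Finset.sum_le_sum; intro l _
        exact bil_cs 𝒜 hsymm hnn _ _
    _ = (∑ k, Real.sqrt (𝒜 (u k) (u k))) ^ 2 := by
        rw [sq, Finset.sum_mul]
        apply Finset.sum_congr rfl
        intro k _
        rw [Finset.mul_sum]
    _ ≤ (Nc : ℝ) * ∑ k, Real.sqrt (𝒜 (u k) (u k)) ^ 2 := by
        have := sq_sum_le_card_mul_sum_sq (s := (univ : Finset (Fin Nc)))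
          (f := fun k => Real.sqrt (𝒜 (u k) (u k)))
        simpa using this
    _ = (Nc : ℝ) * ∑ k, 𝒜 (u k) (u k) := by
        congr 1
        apply Finset.sum_congr rfl
        intro k _
        exact Real.sq_sqrt (hnn _)
end

section
/- Let V be a finite-dimensional real inner product space, A symmetric positive definite on V, B symmetric positive definite on V, and let Ṽ ⊆ V be a subspace with codimension m₀. Suppose λ_max(B⁻¹A) ≤ Λ and that (A v, v) ≥ μ (B v, v) for all v ∈ Ṽ with μ > 0. Then B⁻¹A, which is self-adjoint with respect to the inner product (B·,·), has at least dim V − m₀ eigenvalues (counted with multiplicity) in the interval [μ, Λ]. -/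
open RealInnerProductSpace

noncomputable def sumMap18 {V : Type*} [NormedAddCommGroup V] [InnerProductSpace ℝ V]
    {n : ℕ} (b : Fin n → V) (c : Fin n → ℝ) : V →ₗ[ℝ] V where
  toFun v := ∑ i, (c i * ⟪b i, v⟫) • b i
  map_add' u v := by
    simp [inner_add_right, mul_add, add_smul, Finset.sum_add_distrib]
  map_smul' r v := by
    simp only [inner_smul_right, RingHom.id_apply, Finset.smul_sum, smul_smul]
    congr 1; funext i; ring_nf

lemma sumMap18_symm {V : Type*} [NormedAddCommGroup V] [InnerProductSpace ℝ V]
    {n : ℕ} (b : Fin n → V) (c : Fin n → ℝ) (u v : V) :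
    ⟪sumMap18 b c u, v⟫ = ⟪u, sumMap18 b c v⟫ := by
  simp only [sumMap18, LinearMap.coe_mk, AddHom.coe_mk, sum_inner, inner_sum,
    real_inner_smul_left, real_inner_smul_right]
  refine Finset.sum_congr rfl fun i _ => ?_
  rw [real_inner_comm u (b i)]
  ring

lemma sumMap18_apply_basis {V : Type*} [NormedAddCommGroup V] [InnerProductSpace ℝ V]
    {n : ℕ} (b : Fin n → V) (c : Fin n → ℝ)
    (horth : ∀ i j, ⟪b i, b j⟫ = if i = j then (1:ℝ) else 0) (j : Fin n) :
    sumMap18 b c (b j) = c j • b j := by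
  simp only [sumMap18, LinearMap.coe_mk, AddHom.coe_mk, horth]
  simp [Finset.sum_ite_eq', mul_ite, ite_smul]

/-- Reduced condition number spectral statement: if λ_max(B⁻¹A) ≤ Λ and
(Av,v) ≥ μ(Bv,v) on a subspace Ṽ of codimension m₀, then B⁻¹A has at least
dim V − m₀ eigenvalues (with multiplicity, i.e. linearly independent
generalized eigenvectors) in [μ, Λ]. -/
theorem stmt18 {V : Type*} [NormedAddCommGroup V] [InnerProductSpace ℝ V]
    [FiniteDimensional ℝ V]
    (A B : V →ₗ[ℝ] V)
    (hAsymm : ∀ u v, ⟪A u, v⟫ = ⟪u, A v⟫)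
    (hApos : ∀ v, v ≠ 0 → 0 < ⟪A v, v⟫)
    (hBsymm : ∀ u v, ⟪B u, v⟫ = ⟪u, B v⟫)
    (hBpos : ∀ v, v ≠ 0 → 0 < ⟪B v, v⟫)
    (Vt : Submodule ℝ V) (m₀ : ℕ)
    (hcodim : Module.finrank ℝ V - Module.finrank ℝ Vt = m₀)
    (Λ μ : ℝ) (hμ : 0 < μ)
    (hmax : ∀ (lam : ℝ) (v : V), v ≠ 0 → A v = lam • B v → lam ≤ Λ)
    (hcoer : ∀ v ∈ Vt, μ * ⟪B v, v⟫ ≤ ⟪A v, v⟫) :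
    ∃ (n : ℕ) (lam : Fin n → ℝ) (e : Fin n → V),
      Module.finrank ℝ V - m₀ ≤ n ∧
      LinearIndependent ℝ e ∧
      (∀ i, A (e i) = lam i • B (e i)) ∧
      (∀ i, lam i ∈ Set.Icc μ Λ) := by
  classical
  have hB : B.IsSymmetric := fun u v => hBsymm u v
  have hn : Module.finrank ℝ V = Module.finrank ℝ V := rfl
  let b := hB.eigenvectorBasis hn
  let β := hB.eigenvalues hn
  have hb : ∀ i, B (b i) = β i • b i := fun i => by
    exact_mod_cast hB.apply_eigenvectorBasis hn i
  have horthb : ∀ i j, ⟪b i, b j⟫ = if i = j then (1:ℝ) else 0 :=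
    orthonormal_iff_ite.mp b.orthonormal
  have hβpos : ∀ i, 0 < β i := by
    intro i
    have hne : b i ≠ 0 := b.toBasis.ne_zero i
    have h1 := hBpos (b i) (by simpa using hne)
    rw [hb i, real_inner_smul_left, horthb i i, if_pos rfl, mul_one] at h1
    exact h1
  -- square root of B and its inverse
  set sb : Fin (Module.finrank ℝ V) → ℝ := fun i => Real.sqrt (β i) with hsbdef
  have hsbpos : ∀ i, 0 < sb i := fun i => Real.sqrt_pos.2 (hβpos i)
  let R : V →ₗ[ℝ] V := sumMap18 (⇑b) sb
  let Rinv : V →ₗ[ℝ] V := sumMap18 (⇑b) (fun i => (sb i)⁻¹)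
  have hRb : ∀ j, R (b j) = sb j • b j := sumMap18_apply_basis _ _ horthb
  have hRinvb : ∀ j, Rinv (b j) = (sb j)⁻¹ • b j := sumMap18_apply_basis _ _ horthb
  have hRsym : ∀ u v, ⟪R u, v⟫ = ⟪u, R v⟫ := sumMap18_symm _ _
  have hRinvsym : ∀ u v, ⟪Rinv u, v⟫ = ⟪u, Rinv v⟫ := sumMap18_symm _ _
  have hRR : ∀ v, R (R v) = B v := by
    intro v
    have : R ∘ₗ R = B := by
      apply b.toBasis.ext
      intro j
      simp only [LinearMap.comp_apply, OrthonormalBasis.coe_toBasis]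
      rw [hRb j, map_smul, hRb j, hb j, smul_smul, Real.mul_self_sqrt (hβpos j).le]
    exact LinearMap.ext_iff.mp this v
  have hRRinv : ∀ v, R (Rinv v) = v := by
    intro v
    have : R ∘ₗ Rinv = LinearMap.id := by
      apply b.toBasis.ext
      intro j
      simp only [LinearMap.comp_apply, OrthonormalBasis.coe_toBasis, LinearMap.id_apply]
      rw [hRinvb j, map_smul, hRb j, smul_smul, inv_mul_cancel₀ (hsbpos j).ne', one_smul]
    exact LinearMap.ext_iff.mp this v
  have hRinvinj : Function.Injective Rinv := Function.LeftInverse.injective hRRinv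
  -- the symmetric operator S = R⁻¹ A R⁻¹
  let S : V →ₗ[ℝ] V := Rinv ∘ₗ A ∘ₗ Rinv
  have hS : S.IsSymmetric := by
    intro u v
    show ⟪Rinv (A (Rinv u)), v⟫ = ⟪u, Rinv (A (Rinv v))⟫
    rw [hRinvsym, hAsymm, ← hRinvsym]
  let w := hS.eigenvectorBasis hn
  let lam := hS.eigenvalues hn
  have hw : ∀ i, S (w i) = lam i • w i := fun i => by
    exact_mod_cast hS.apply_eigenvectorBasis hn i
  have horthw : ∀ i j, ⟪w i, w j⟫ = if i = j then (1:ℝ) else 0 :=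
    orthonormal_iff_ite.mp w.orthonormal
  set e : Fin (Module.finrank ℝ V) → V := fun i => Rinv (w i) with hedef
  have hRe : ∀ i, R (e i) = w i := fun i => hRRinv (w i)
  have hene : ∀ i, e i ≠ 0 := by
    intro i h0
    have h1 : w i = 0 := by rw [← hRe i, h0, map_zero]
    have h2 : w i ≠ 0 := by simpa using w.toBasis.ne_zero i
    exact h2 h1
  have heig : ∀ i, A (e i) = lam i • B (e i) := by
    intro i
    have h1 : Rinv (A (e i)) = lam i • w i := hw i
    have h2 : A (e i) = R (lam i • w i) := by rw [← h1, hRRinv]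
    rw [h2, map_smul]
    congr 1
    rw [← hRe i, hRR]
  have horthe : ∀ i j, ⟪B (e i), e j⟫ = if i = j then (1:ℝ) else 0 := by
    intro i j
    rw [← hRR (e i), hRsym, hRe, hRe]
    exact horthw i j
  have hli : LinearIndependent ℝ e := by
    have := w.toBasis.linearIndependent.map' Rinv (LinearMap.ker_eq_bot.mpr hRinvinj)
    exact this
  have hlamΛ : ∀ i, lam i ≤ Λ := fun i => hmax (lam i) (e i) (hene i) (heig i)
  -- counting: bad and good indices
  set bad : Finset (Fin (Module.finrank ℝ V)) := Finset.univ.filter (fun i => lam i < μ) with hbaddef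
  set good : Finset (Fin (Module.finrank ℝ V)) := Finset.univ.filter (fun i => ¬ lam i < μ) with hgooddef
  have hcards : bad.card + good.card = Module.finrank ℝ V := by
    rw [hbaddef, hgooddef, Finset.card_filter_add_card_filter_not]
    simp
  -- span of bad eigenvectors meets Vt trivially
  have hdisj : Disjoint (Submodule.span ℝ (Set.range (fun i : bad => e i))) Vt := by
    rw [Submodule.disjoint_def]
    intro v hv hvVt
    by_contra hv0
    obtain ⟨c, hc⟩ := (Submodule.mem_span_range_iff_exists_fun ℝ).1 hv
    have hBvv : ⟪B v, v⟫ = ∑ i : bad, c i * c i := by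
      rw [← hc, map_sum]
      simp only [map_smul, sum_inner, inner_sum, real_inner_smul_left, real_inner_smul_right,
        horthe]
      refine Finset.sum_congr rfl fun i _ => ?_
      simp [Subtype.coe_inj, Finset.mul_sum, mul_ite, Finset.sum_ite_eq]
    have hAvv : ⟪A v, v⟫ = ∑ i : bad, lam (i : Fin (Module.finrank ℝ V)) * (c i * c i) := by
      rw [← hc, map_sum]
      simp only [map_smul, heig, smul_smul, sum_inner, inner_sum, real_inner_smul_left,
        real_inner_smul_right, horthe]
      refine Finset.sum_congr rfl fun i _ => ?_
      simp only [Subtype.coe_inj, Finset.mul_sum, mul_ite, mul_one, mul_zero,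
        Finset.sum_ite_eq, Finset.sum_ite_eq', Finset.mem_univ, if_true]
      ring
    obtain ⟨i₀, hi₀⟩ : ∃ i : bad, c i ≠ 0 := by
      by_contra hall
      push_neg at hall
      apply hv0
      rw [← hc]
      simp [hall]
    have hstrict : ∑ i : bad, lam (i : Fin (Module.finrank ℝ V)) * (c i * c i)
        < ∑ i : bad, μ * (c i * c i) := by
      apply Finset.sum_lt_sum
      · intro i _
        have hib : lam (i : Fin (Module.finrank ℝ V)) < μ := by
          have h := i.2
          simp only [hbaddef, Finset.mem_filter] at h
          exact h.2
        exact mul_le_mul_of_nonneg_right hib.le (mul_self_nonneg _)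
      · refine ⟨i₀, Finset.mem_univ _, ?_⟩
        have hib : lam (i₀ : Fin (Module.finrank ℝ V)) < μ := by
          have h := i₀.2
          simp only [hbaddef, Finset.mem_filter] at h
          exact h.2
        exact mul_lt_mul_of_pos_right hib (mul_self_pos.mpr hi₀)
    have hco := hcoer v hvVt
    rw [hBvv, hAvv] at hco
    have hms : ∑ i : bad, μ * (c i * c i) = μ * ∑ i : bad, (c i * c i) :=
      (Finset.mul_sum _ _ _).symm
    rw [hms] at hstrict
    linarith
  have hbadcard : bad.card ≤ m₀ := by
    have hlib : LinearIndependent ℝ (fun i : bad => e i) :=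
      hli.comp (Subtype.val : bad → Fin (Module.finrank ℝ V)) Subtype.coe_injective
    have hspan : Module.finrank ℝ (Submodule.span ℝ (Set.range (fun i : bad => e i)))
        = bad.card := by
      rw [finrank_span_eq_card hlib, Fintype.card_coe]
    have hle := Submodule.finrank_add_finrank_le_of_disjoint hdisj
    rw [hspan] at hle
    have hVtle : Module.finrank ℝ Vt ≤ Module.finrank ℝ V := Submodule.finrank_le Vt
    omega
  -- assemble the answer from the good indices
  let g := good.equivFin
  refine ⟨good.card, fun k => lam (g.symm k : Fin (Module.finrank ℝ V)),
    fun k => e (g.symm k : Fin (Module.finrank ℝ V)), ?_, ?_, ?_, ?_⟩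
  · omega
  · exact hli.comp _ (Subtype.coe_injective.comp g.symm.injective)
  · intro k; exact heig _
  · intro k
    refine ⟨?_, hlamΛ _⟩
    have h := (g.symm k).2
    simp only [hgooddef, Finset.mem_filter] at h
    exact not_lt.1 h.2
end
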